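/- Let ρ, σ be density operators on a finite-dimensional Hilbert space with supp(ρ) ⊆ supp(σ), and set X := σ^{-1/2} ρ σ^{-1/2}. Fix α > 1 and suppose Tr(σ X^α) ≤ e^{(α-1)ε} for some ε ≥ 0. Then for every finite POVM {M_z} with induced distributions p_z = Tr(M_z ρ), q_z = Tr(M_z σ), the classical Rényi divergence satisfies D_α(p‖q) := (1/(α-1)) log Σ_z p_z^α q_z^{1-α} ≤ ε. -/

import Mathlib

open Matrix BigOperators
open scoped ComplexOrder

/-- Real power of a Hermitian matrix via the functional calculus
(junk value `0` on non-Hermitian inputs). -/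
noncomputable def mrpow {n : Type*} [Fintype n] [DecidableEq n]
    (X : Matrix n n ℂ) (t : ℝ) : Matrix n n ℂ :=
  if h : X.IsHermitian then
    (h.eigenvectorUnitary : Matrix n n ℂ) *
      Matrix.diagonal (fun i => ((h.eigenvalues i ^ t : ℝ) : ℂ)) *
      star (h.eigenvectorUnitary : Matrix n n ℂ)
  else 0

section helpers
variable {n : Type*} [Fintype n] [DecidableEq n]

lemma jensen_rpow {ι : Type*} [Fintype ι] (c lam : ι → ℝ)
    (hc : ∀ i, 0 ≤ c i) (hlam : ∀ i, 0 ≤ lam i) {α : ℝ} (hα : 1 < α) :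
    (∑ i, c i * lam i) ^ α * (∑ i, c i) ^ (1 - α) ≤ ∑ i, c i * lam i ^ α := by
  set q := ∑ i, c i with hq
  rcases eq_or_lt_of_le (Finset.sum_nonneg fun i _ => hc i) with h0 | hqpos
  · have hci : ∀ i ∈ Finset.univ, c i = 0 := by
      intro i _
      exact le_antisymm (by
        have := Finset.single_le_sum (fun j _ => hc j) (Finset.mem_univ i)
        rw [← h0] at this; linarith) (hc i)
    have hp : (∑ i, c i * lam i) = 0 :=
      Finset.sum_eq_zero fun i hi => by rw [hci i hi, zero_mul]
    have hr : (∑ i, c i * lam i ^ α) = 0 :=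
      Finset.sum_eq_zero fun i hi => by rw [hci i hi, zero_mul]
    rw [hp, hr, Real.zero_rpow (by positivity), zero_mul]
  · have key := Real.rpow_arith_mean_le_arith_mean_rpow Finset.univ
      (fun i => c i / q) lam (fun i _ => div_nonneg (hc i) hqpos.le)
      (by rw [← Finset.sum_div, ← hq, div_self hqpos.ne']) (fun i _ => hlam i) hα.le
    have hp0 : 0 ≤ ∑ i, c i * lam i :=
      Finset.sum_nonneg fun i _ => mul_nonneg (hc i) (hlam i)
    have hL : (∑ i, (c i / q) * lam i) = (∑ i, c i * lam i) / q := by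
      rw [Finset.sum_div]; congr 1; ext i; ring
    have hR : (∑ i, (c i / q) * lam i ^ α) = (∑ i, c i * lam i ^ α) / q := by
      rw [Finset.sum_div]; congr 1; ext i; ring
    rw [hL, hR, Real.div_rpow hp0 hqpos.le,
      div_le_div_iff₀ (by positivity) hqpos] at key
    have hqe : q ^ (1 - α) = q / q ^ α := by
      rw [eq_div_iff (by positivity), ← Real.rpow_add' hqpos.le (by norm_num)]
      norm_num
      exact hq.symm
    rw [hqe, div_eq_mul_inv, ← mul_assoc, mul_assoc _ q, mul_comm q, ← mul_assoc,
      ← div_eq_mul_inv, div_mul_eq_mul_div, div_le_iff₀ (by positivity)]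
    linarith [key]

lemma mrpow_eq_of (X : Matrix n n ℂ) (hX : X.IsHermitian) (t : ℝ) :
    mrpow X t = (hX.eigenvectorUnitary : Matrix n n ℂ) *
      Matrix.diagonal (fun i => ((hX.eigenvalues i ^ t : ℝ) : ℂ)) *
      star (hX.eigenvectorUnitary : Matrix n n ℂ) := dif_pos hX

lemma conj_mul_conj {U : Matrix n n ℂ} (hU : U ∈ Matrix.unitaryGroup n ℂ) (d e : n → ℂ) :
    (U * Matrix.diagonal d * star U) * (U * Matrix.diagonal e * star U)
      = U * Matrix.diagonal (fun i => d i * e i) * star U := by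
  have h1 : star U * U = 1 := hU.1
  calc (U * Matrix.diagonal d * star U) * (U * Matrix.diagonal e * star U)
      = U * Matrix.diagonal d * (star U * U) * Matrix.diagonal e * star U := by
        simp only [Matrix.mul_assoc]
    _ = U * (Matrix.diagonal d * Matrix.diagonal e) * star U := by
        rw [h1]; simp only [Matrix.mul_one, Matrix.mul_assoc]
    _ = U * Matrix.diagonal (fun i => d i * e i) * star U := by
        rw [Matrix.diagonal_mul_diagonal]

lemma trace_mul_conj_diag (B : Matrix n n ℂ) (U : Matrix n n ℂ) (d : n → ℂ) :
    (B * (U * Matrix.diagonal d * star U)).trace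
      = ∑ i, (star U * B * U) i i * d i := by
  have : B * (U * Matrix.diagonal d * star U)
      = (B * U) * Matrix.diagonal d * star U := by simp only [Matrix.mul_assoc]
  rw [this, Matrix.trace_mul_cycle, ← Matrix.mul_assoc]
  simp [Matrix.trace, Matrix.diag, Matrix.mul_diagonal, mul_comm]

lemma psd_diag (A : Matrix n n ℂ) (hA : A.PosSemidef) (i : n) :
    0 ≤ (A i i).re ∧ (A i i).im = 0 := by
  have h := hA.dotProduct_mulVec_nonneg (Pi.single i 1)
  have hv : dotProduct (star (Pi.single i 1)) (A.mulVec (Pi.single i 1)) = A i i := by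
    simp [Matrix.mulVec_single, dotProduct, Pi.single_apply, apply_ite, Finset.sum_ite_eq']
  rw [hv] at h
  rcases Complex.nonneg_iff.mp h with ⟨h1, h2⟩
  exact ⟨h1, h2.symm⟩

end helpers

/-- **Quantum moments accountant ⟹ measured Rényi bound.**
Let `ρ, σ` be density operators with `supp ρ ⊆ supp σ`, let
`X = σ^{-1/2} ρ σ^{-1/2}`, fix `α > 1` and suppose
`Tr(σ X^α) ≤ e^{(α−1)ε}`.  Then for every finite POVM `{M_z}` with induced
distributions `p_z = Tr(M_z ρ)`, `q_z = Tr(M_z σ)`, the classical Rényi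
divergence satisfies `D_α(p‖q) ≤ ε`. -/
theorem qma_to_measured_renyi
    {n : Type*} [Fintype n] [DecidableEq n]
    (ρ σ : Matrix n n ℂ)
    (hρ : ρ.PosSemidef) (hρt : ρ.trace = 1)
    (hσ : σ.PosSemidef) (hσt : σ.trace = 1)
    (hsupp : ∀ v : n → ℂ, σ.mulVec v = 0 → ρ.mulVec v = 0)
    (α ε : ℝ) (hα : 1 < α) (hε : 0 ≤ ε)
    (hmom :
      (σ * mrpow (mrpow σ (-(1 / 2)) * ρ * mrpow σ (-(1 / 2))) α).trace.re
        ≤ Real.exp ((α - 1) * ε))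
    {Z : Type*} [Fintype Z]
    (M : Z → Matrix n n ℂ)
    (hMpos : ∀ z, (M z).PosSemidef) (hMsum : ∑ z, M z = 1) :
    (α - 1)⁻¹ *
        Real.log (∑ z,
          ((M z * ρ).trace.re) ^ α * ((M z * σ).trace.re) ^ (1 - α))
      ≤ ε := by
  have hσH : σ.IsHermitian := hσ.1
  set U : Matrix n n ℂ := (hσH.eigenvectorUnitary : Matrix n n ℂ) with hUdef
  have hU : U ∈ Matrix.unitaryGroup n ℂ := (hσH.eigenvectorUnitary).2
  set μ : n → ℝ := hσH.eigenvalues with hμdef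
  have hμ0 : ∀ i, 0 ≤ μ i := hσ.eigenvalues_nonneg
  set S : Matrix n n ℂ := mrpow σ (1/2) with hSdef
  set w : Matrix n n ℂ := mrpow σ (-(1/2)) with hwdef
  have hSeq : S = U * Matrix.diagonal (fun i => ((μ i ^ (1/2:ℝ) : ℝ) : ℂ)) * star U :=
    mrpow_eq_of σ hσH (1/2)
  have hweq : w = U * Matrix.diagonal (fun i => ((μ i ^ (-(1/2):ℝ) : ℝ) : ℂ)) * star U :=
    mrpow_eq_of σ hσH (-(1/2))
  have hσeq : σ = U * Matrix.diagonal (fun i => ((μ i : ℝ) : ℂ)) * star U := by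
    have := hσH.spectral_theorem
    exact this
  -- S hermitian, w hermitian
  have hconjdiag : ∀ f : n → ℝ,
      (U * Matrix.diagonal (fun i => ((f i : ℝ) : ℂ)) * star U).IsHermitian := by
    intro f
    have hD : (Matrix.diagonal (fun i => ((f i : ℝ) : ℂ))).IsHermitian := by
      rw [Matrix.isHermitian_diagonal_iff]
      intro i
      exact Complex.conj_ofReal _
    simpa [Matrix.star_eq_conjTranspose] using
      Matrix.isHermitian_mul_mul_conjTranspose U hD
  -- S * S = σ
  have hSS : S * S = σ := by
    have hfun : (fun i => ((μ i ^ ((1:ℝ)/2) : ℝ) : ℂ) * ((μ i ^ ((1:ℝ)/2) : ℝ) : ℂ))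
        = fun i => ((μ i : ℝ) : ℂ) := by
      funext i
      rw [← Complex.ofReal_mul, ← Real.rpow_add' (hμ0 i) (by norm_num)]
      norm_num
    rw [hSeq, conj_mul_conj hU, hfun, ← hσeq]
  -- P := S * w, projection facts
  set P : Matrix n n ℂ := S * w with hPdef
  have hwS : w * S = P := by
    have hfun : (fun i => ((μ i ^ (-((1:ℝ)/2)) : ℝ) : ℂ) * ((μ i ^ ((1:ℝ)/2) : ℝ) : ℂ))
        = fun i => ((μ i ^ ((1:ℝ)/2) : ℝ) : ℂ) * ((μ i ^ (-((1:ℝ)/2)) : ℝ) : ℂ) := by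
      funext i; ring
    rw [hPdef, hweq, hSeq, conj_mul_conj hU, conj_mul_conj hU, hfun]
  have hσP : σ * P = σ := by
    have hfun : (fun i => ((μ i : ℝ) : ℂ) *
          (((μ i ^ ((1:ℝ)/2) : ℝ) : ℂ) * ((μ i ^ (-((1:ℝ)/2)) : ℝ) : ℂ)))
        = fun i => ((μ i : ℝ) : ℂ) := by
      funext i
      rcases eq_or_lt_of_le (hμ0 i) with h0 | hpos
      · rw [← h0]
        norm_num
      · rw [← Complex.ofReal_mul, ← Real.rpow_add hpos]
        norm_num
    rw [hPdef, hSeq, hweq, conj_mul_conj hU]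
    conv_lhs => rw [hσeq]
    rw [conj_mul_conj hU, hfun, ← hσeq]
  have hρP : ρ * P = ρ := by
    have h1 : σ * (1 - P) = 0 := by
      rw [Matrix.mul_sub, Matrix.mul_one, hσP, sub_self]
    have h2 : ρ * (1 - P) = 0 := by
      ext i j
      have hker : σ.mulVec ((1 - P).mulVec (Pi.single j 1)) = 0 := by
        rw [Matrix.mulVec_mulVec, h1, Matrix.zero_mulVec]
      have hv := hsupp _ hker
      rw [Matrix.mulVec_mulVec] at hv
      have := congrFun hv i
      simpa [Matrix.mulVec_single] using this
    rw [Matrix.mul_sub, Matrix.mul_one] at h2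
    exact (sub_eq_zero.mp h2).symm
  have hSH : S.IsHermitian := by rw [hSeq]; exact hconjdiag _
  have hwH : w.IsHermitian := by rw [hweq]; exact hconjdiag _
  have hPH : P.IsHermitian := by
    rw [hPdef, Matrix.IsHermitian, Matrix.conjTranspose_mul, hSH.eq, hwH.eq, hwS]
  have hPρ : P * ρ = ρ := by
    have : (ρ * P)ᴴ = ρᴴ := by rw [hρP]
    rw [Matrix.conjTranspose_mul, hPH.eq, hρ.1.eq] at this
    exact this
  set X : Matrix n n ℂ := w * ρ * w with hXdef
  have hXpsd : X.PosSemidef := by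
    have := hρ.conjTranspose_mul_mul_same w
    rwa [hwH.eq] at this
  have hSXS : S * X * S = ρ := by
    have : S * X * S = (S * w) * ρ * (w * S) := by
      rw [hXdef]; simp only [Matrix.mul_assoc]
    rw [this, ← hPdef, hwS, hPρ, hρP]
  have hXH : X.IsHermitian := hXpsd.1
  set V : Matrix n n ℂ := (hXH.eigenvectorUnitary : Matrix n n ℂ) with hVdef
  have hV : V ∈ Matrix.unitaryGroup n ℂ := (hXH.eigenvectorUnitary).2
  set lam : n → ℝ := hXH.eigenvalues with hlamdef
  have hlam0 : ∀ i, 0 ≤ lam i := hXpsd.eigenvalues_nonneg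
  have hXeq : X = V * Matrix.diagonal (fun i => ((lam i : ℝ) : ℂ)) * star V := by
    have := hXH.spectral_theorem
    exact this
  have hXα : mrpow X α = V * Matrix.diagonal (fun i => ((lam i ^ α : ℝ) : ℂ)) * star V :=
    mrpow_eq_of X hXH α
  set B : Z → Matrix n n ℂ := fun z => S * M z * S with hBdef
  have hBpsd : ∀ z, (B z).PosSemidef := by
    intro z
    have := (hMpos z).mul_mul_conjTranspose_same S
    rwa [hSH.eq] at this
  have hBsum : S * (∑ z, M z) * S = ∑ z, B z := by
    rw [Finset.mul_sum, Finset.sum_mul]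
  have hBsumσ : (∑ z, B z) = σ := by
    rw [← hBsum, hMsum, Matrix.mul_one, hSS]
  have hVBV : ∀ z, (star V * B z * V).PosSemidef := by
    intro z
    have := (hBpsd z).conjTranspose_mul_mul_same V
    rwa [← Matrix.star_eq_conjTranspose] at this
  set c : Z → n → ℝ := fun z i => ((star V * B z * V) i i).re with hcdef
  have hc0 : ∀ z i, 0 ≤ c z i := fun z i => (psd_diag _ (hVBV z) i).1
  have hcim : ∀ z i, ((star V * B z * V) i i).im = 0 := fun z i => (psd_diag _ (hVBV z) i).2
  have hentry : ∀ z i, (star V * B z * V) i i = ((c z i : ℝ) : ℂ) := fun z i =>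
    Complex.ext (by simp [hcdef]) (by simp [hcim z i])
  -- p
  have hp : ∀ z, (M z * ρ).trace = ∑ i, ((c z i : ℝ) : ℂ) * ((lam i : ℝ) : ℂ) := by
    intro z
    have h1 : M z * ρ = (M z * S) * X * S := by
      rw [← hSXS]; simp only [Matrix.mul_assoc]
    have h2 : S * (M z * S) = B z := by
      rw [hBdef]; simp only [Matrix.mul_assoc]
    rw [h1, Matrix.trace_mul_cycle, h2]
    conv_lhs => rw [hXeq]
    rw [trace_mul_conj_diag]
    exact Finset.sum_congr rfl fun i _ => by rw [hentry]
  -- q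
  have hq : ∀ z, (M z * σ).trace = ∑ i, ((c z i : ℝ) : ℂ) := by
    intro z
    have h1 : M z * σ = (M z * S) * S := by
      rw [← hSS]; simp only [Matrix.mul_assoc]
    have h2 : S * (M z * S) = B z := by
      rw [hBdef]; simp only [Matrix.mul_assoc]
    rw [h1, Matrix.trace_mul_comm, h2]
    have h5 : (V * Matrix.diagonal (fun _ : n => (1 : ℂ)) * star V) = 1 := by
      rw [Matrix.diagonal_one, Matrix.mul_one]
      exact hV.2
    have h4 := trace_mul_conj_diag (B z) V (fun _ => (1 : ℂ))
    rw [h5, Matrix.mul_one] at h4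
    rw [h4]
    exact Finset.sum_congr rfl fun i _ => by rw [hentry, mul_one]
  -- moment
  have hmom2 : (σ * mrpow X α).trace
      = ∑ z, ∑ i, ((c z i : ℝ) : ℂ) * ((lam i ^ α : ℝ) : ℂ) := by
    rw [← hBsumσ, Finset.sum_mul, Matrix.trace_sum]
    refine Finset.sum_congr rfl fun z _ => ?_
    rw [hXα, trace_mul_conj_diag]
    exact Finset.sum_congr rfl fun i _ => by rw [hentry]
  -- real parts
  have hpre : ∀ z, (M z * ρ).trace.re = ∑ i, c z i * lam i := by
    intro z
    have hcast : (∑ i, ((c z i : ℝ) : ℂ) * ((lam i : ℝ) : ℂ))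
        = ((∑ i, c z i * lam i : ℝ) : ℂ) := by push_cast; ring
    rw [hp z, hcast, Complex.ofReal_re]
  have hqre : ∀ z, (M z * σ).trace.re = ∑ i, c z i := by
    intro z
    have hcast : (∑ i, ((c z i : ℝ) : ℂ)) = ((∑ i, c z i : ℝ) : ℂ) := by push_cast; ring
    rw [hq z, hcast, Complex.ofReal_re]
  have hmomre : (σ * mrpow X α).trace.re = ∑ z, ∑ i, c z i * lam i ^ α := by
    have hcast : (∑ z, ∑ i, ((c z i : ℝ) : ℂ) * ((lam i ^ α : ℝ) : ℂ))
        = ((∑ z, ∑ i, c z i * lam i ^ α : ℝ) : ℂ) := by push_cast; ring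
    rw [hmom2, hcast, Complex.ofReal_re]
  -- final assembly
  set T := ∑ z, ((M z * ρ).trace.re) ^ α * ((M z * σ).trace.re) ^ (1 - α) with hT
  have hTle : T ≤ Real.exp ((α - 1) * ε) := by
    calc T ≤ ∑ z, ∑ i, c z i * lam i ^ α := by
          apply Finset.sum_le_sum
          intro z _
          rw [hpre z, hqre z]
          exact jensen_rpow (c z) lam (hc0 z) hlam0 hα
      _ = (σ * mrpow X α).trace.re := hmomre.symm
      _ ≤ Real.exp ((α - 1) * ε) := hmom
  have hT0 : 0 ≤ T := by
    apply Finset.sum_nonneg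
    intro z _
    apply mul_nonneg
    · apply Real.rpow_nonneg
      rw [hpre z]
      exact Finset.sum_nonneg fun i _ => mul_nonneg (hc0 z i) (hlam0 i)
    · apply Real.rpow_nonneg
      rw [hqre z]
      exact Finset.sum_nonneg fun i _ => hc0 z i
  rcases eq_or_lt_of_le hT0 with h0 | hTpos
  · rw [← h0, Real.log_zero, mul_zero]
    exact hε
  · have hlog : Real.log T ≤ (α - 1) * ε := by
      rw [Real.log_le_iff_le_exp hTpos]
      exact hTle
    rw [inv_mul_le_iff₀ (by linarith : (0:ℝ) < α - 1)]
    exact hlog
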